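/- For a real number x ≠ 0 and naturals n ≥ k ≥ 1, the coefficient of z^n in the formal power series (1/(x+z) − 1/x)^k equals C(n-1, k-1)·(−1)^n·x^(−n−k). -/

import Mathlib

open PowerSeries

theorem coeff_pow_inv_shift (x : ℝ) (hx : x ≠ 0) (n k : ℕ) (hk : 1 ≤ k) (hkn : k ≤ n) :
    PowerSeries.coeff (R := ℝ) n
        ((PowerSeries.C (R := ℝ) (1 / x) * (1 + PowerSeries.C (R := ℝ) (1 / x) * PowerSeries.X)⁻¹
            - PowerSeries.C (R := ℝ) (1 / x)) ^ k)
      = ((n - 1).choose (k - 1) : ℝ) * (-1) ^ n / x ^ (n + k) := by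
  set a : ℝ := 1 / x with ha
  set g : ℝ⟦X⟧ := rescale (-a) (mk 1) with hg
  have hrs : rescale (-a) (1 - X : ℝ⟦X⟧) = 1 + C a * X := by
    rw [map_sub, map_one, rescale_X]
    ring_nf
    rw [map_neg]
    ring
  have hinv : (1 + C a * X : ℝ⟦X⟧)⁻¹ = g := by
    rw [PowerSeries.inv_eq_iff_mul_eq_one (by simp)]
    rw [← hrs, hg, ← map_mul, mk_one_mul_one_sub_eq_one, map_one]
  -- base series equals C(-a^2) * (X * g)
  have hgX : g - 1 = C (-a) * (X * g) := by
    ext m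
    cases m with
    | zero => simp [hg, rescale_mk]
    | succ m =>
      simp [hg, rescale_mk, coeff_C_mul, PowerSeries.coeff_succ_X_mul, pow_succ]
      ring
  have hbase : C a * (1 + C a * X : ℝ⟦X⟧)⁻¹ - C a
      = C (-(a^2)) * (X * g) := by
    rw [hinv, show C a * g - C a = C a * (g - 1) by ring, hgX,
      ← mul_assoc, ← map_mul]
    ring_nf
  rw [hbase, mul_pow, mul_pow, ← map_pow, mul_comm ((X:ℝ⟦X⟧)^k),
    coeff_C_mul]
  -- coefficient of g^k * X^k
  obtain ⟨m, rfl⟩ : ∃ m, n = m + k := ⟨n - k, (Nat.sub_add_cancel hkn).symm⟩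
  rw [PowerSeries.coeff_mul_X_pow]
  obtain ⟨d, rfl⟩ : ∃ d, k = d + 1 := ⟨k - 1, (Nat.sub_add_cancel hk).symm⟩
  have hgk : g ^ (d + 1) = mk fun j => (-a) ^ j * (Nat.choose (d + j) d : ℝ) := by
    rw [hg, ← map_pow, mk_one_pow_eq_mk_choose_add, rescale_mk]
  rw [hgk, coeff_mk]
  have hch : (m + (d + 1) - 1).choose (d + 1 - 1) = (d + m).choose d := by
    congr 1 <;> omega
  rw [hch]
  have hxa : a = x⁻¹ := by rw [ha, one_div]
  rw [hxa]
  rw [div_eq_mul_inv, ← inv_pow]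
  have h1 : (-(x⁻¹ ^ 2)) ^ (d + 1) * ((-x⁻¹) ^ m * ((d + m).choose d : ℝ))
      = ((d + m).choose d : ℝ) * ((-1) ^ (d + 1) * (-1)^m * (x⁻¹) ^ (2 * (d+1) + m)) := by
    rw [neg_pow, neg_pow (x⁻¹), ← pow_mul, pow_add]
    ring
  rw [h1, ← pow_add (-1:ℝ),
    show d + 1 + m = m + (d + 1) by omega,
    show 2 * (d + 1) + m = m + (d + 1) + (d + 1) by omega]
  ring
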